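/- (Gross-Prasad divisor matching) Let $a_i = (-1)^i e_i(\alpha_1^2,\dots,\alpha_n^2)$ and let $b_1,\dots,b_n$ be indeterminates with $b_0 = 1$. Then, as polynomials, $\sum_{\lambda \subset n \times (n-1)} m_{2\lambda}(\alpha_1,\dots,\alpha_n) \prod_{k=1}^n (b_{n-\lambda_k} - a_{n-\lambda_k}) = \sum_{\lambda \subset n \times n} m_{2(n-\lambda)}(\alpha_1^2,\dots,\alpha_n^2)\, b_\lambda$, where $m_{2\mu}(\alpha)$ denotes the monomial symmetric polynomial with doubled parts in the variables $\alpha_i$ and $m_\mu(\alpha^2)$ the monomial symmetric polynomial in the variables $\alpha_i^2$, and $b_\lambda = \prod_k b_{\lambda_k}$. -/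

import Mathlib

/-- The monomial symmetric polynomial in `n` variables attached to the exponent
vector `lam : Fin n → ℕ`: the sum of all distinct monomials obtained by permuting
the exponent vector. -/
def msym {R : Type*} [CommRing R] (n : ℕ) (lam : Fin n → ℕ) (α : Fin n → R) : R :=
  ∑ v ∈ Finset.image (fun σ : Equiv.Perm (Fin n) => lam ∘ σ) Finset.univ, ∏ i, α i ^ v i

/-- The `k`-th elementary symmetric polynomial in the `n` variables `α`. -/
def esym {R : Type*} [CommRing R] (n k : ℕ) (α : Fin n → R) : R :=
  ∑ s ∈ Finset.powersetCard k (Finset.univ : Finset (Fin n)), ∏ i ∈ s, α i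

/-- The finset of partitions `λ = (λ₁ ≥ ⋯ ≥ λ_n)` with `n` parts (allowing zero parts),
each part at most `B`; i.e. partitions whose Young diagram fits in an `n × B` box,
encoded as weakly decreasing functions `Fin n → ℕ`. -/
def partsBdd (n B : ℕ) : Finset (Fin n → ℕ) :=
  ((Finset.univ : Finset (Fin n → Fin (B + 1))).filter
      (fun f => ∀ i j : Fin n, i ≤ j → (f j : ℕ) ≤ (f i : ℕ))).image
    (fun f i => (f i : ℕ))

open Finset

/-- The orbit of an exponent vector under the symmetric group. -/
def gpOrbit (n : ℕ) (lam : Fin n → ℕ) : Finset (Fin n → ℕ) :=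
  Finset.image (fun σ : Equiv.Perm (Fin n) => lam ∘ σ) Finset.univ

lemma mem_gpOrbit {n : ℕ} {lam v : Fin n → ℕ} :
    v ∈ gpOrbit n lam ↔ ∃ σ : Equiv.Perm (Fin n), lam ∘ σ = v := by
  simp [gpOrbit]

lemma mem_partsBdd {n B : ℕ} {lam : Fin n → ℕ} :
    lam ∈ partsBdd n B ↔ (∀ i, lam i ≤ B) ∧ ∀ i j : Fin n, i ≤ j → lam j ≤ lam i := by
  constructor
  · intro h
    simp only [partsBdd, mem_image, mem_filter, mem_univ, true_and] at h
    obtain ⟨f, hf, rfl⟩ := h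
    exact ⟨fun i => Nat.lt_succ_iff.mp (f i).isLt, hf⟩
  · rintro ⟨h1, h2⟩
    simp only [partsBdd, mem_image, mem_filter, mem_univ, true_and]
    exact ⟨fun i => ⟨lam i, Nat.lt_succ_of_le (h1 i)⟩, h2, funext fun i => rfl⟩

/-- Two weakly decreasing vectors that are permutations of each other are equal. -/
lemma antitone_eq_of_perm {n : ℕ} {p q : Fin n → ℕ}
    (hp : ∀ i j : Fin n, i ≤ j → p j ≤ p i) (hq : ∀ i j : Fin n, i ≤ j → q j ≤ q i)
    (σ : Equiv.Perm (Fin n)) (h : p ∘ σ = q) : p = q := by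
  haveI : IsAntisymm ℕ (· ≥ ·) := ⟨fun a b h1 h2 => le_antisymm h2 h1⟩
  apply List.ofFn_injective
  have hperm : (List.ofFn p).Perm (List.ofFn q) := by
    rw [← h]; exact (σ.ofFn_comp_perm p).symm
  have hsp : (List.ofFn p).Pairwise (· ≥ ·) :=
    List.pairwise_ofFn.mpr (fun i j hij => hp i j (le_of_lt hij))
  have hsq : (List.ofFn q).Pairwise (· ≥ ·) :=
    List.pairwise_ofFn.mpr (fun i j hij => hq i j (le_of_lt hij))
  exact hperm.eq_of_pairwise (fun a b _ _ h1 h2 => le_antisymm h2 h1) hsp hsq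

lemma gpOrbit_pairwiseDisjoint (n B : ℕ) :
    ((partsBdd n B : Finset (Fin n → ℕ)) : Set (Fin n → ℕ)).PairwiseDisjoint (gpOrbit n) := by
  intro p hp q hq hpq
  simp only [mem_coe, mem_partsBdd] at hp hq
  refine Finset.disjoint_left.mpr fun v hvp hvq => hpq ?_
  obtain ⟨σ, hσ⟩ := mem_gpOrbit.mp hvp
  obtain ⟨τ, hτ⟩ := mem_gpOrbit.mp hvq
  refine antitone_eq_of_perm hp.2 hq.2 (τ⁻¹.trans σ) ?_
  funext x
  have : p (σ (τ⁻¹ x)) = q (τ (τ⁻¹ x)) := by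
    rw [show q (τ (τ⁻¹ x)) = (q ∘ τ) (τ⁻¹ x) from rfl, hτ, ← hσ]; rfl
  simpa using this

lemma exists_sorted {n B : ℕ} (v : Fin n → ℕ) (hv : ∀ i, v i ≤ B) :
    ∃ lam ∈ partsBdd n B, v ∈ gpOrbit n lam := by
  classical
  let τ : Equiv.Perm (Fin n) := (Fin.revPerm).trans (Tuple.sort v)
  refine ⟨v ∘ τ, ?_, ?_⟩
  · rw [mem_partsBdd]
    refine ⟨fun i => hv _, fun i j hij => ?_⟩
    have : Fin.rev j ≤ Fin.rev i := Fin.rev_le_rev.mpr hij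
    exact Tuple.monotone_sort v this
  · rw [mem_gpOrbit]
    exact ⟨τ⁻¹, by funext i; simp⟩

lemma biUnion_gpOrbit (n B : ℕ) :
    (partsBdd n B).biUnion (gpOrbit n) =
      Fintype.piFinset (fun _ : Fin n => Finset.range (B + 1)) := by
  ext v
  simp only [mem_biUnion, Fintype.mem_piFinset, mem_range, Nat.lt_succ_iff]
  constructor
  · rintro ⟨lam, hlam, hv⟩ i
    obtain ⟨σ, hσ⟩ := mem_gpOrbit.mp hv
    rw [← hσ]
    exact (mem_partsBdd.mp hlam).1 _
  · intro hv
    exact exists_sorted v hv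

lemma grouping {R : Type*} [CommRing R] (n B : ℕ) (c : ℕ → R) (β : Fin n → R) :
    ∏ i : Fin n, ∑ j ∈ Finset.range (B + 1), c j * β i ^ j
      = ∑ lam ∈ partsBdd n B,
          (∑ v ∈ gpOrbit n lam, ∏ i, β i ^ v i) * ∏ k, c (lam k) := by
  classical
  rw [Finset.prod_univ_sum, ← biUnion_gpOrbit n B,
    Finset.sum_biUnion (gpOrbit_pairwiseDisjoint n B)]
  refine Finset.sum_congr rfl fun lam _ => ?_
  rw [Finset.sum_mul]
  refine Finset.sum_congr rfl fun v hv => ?_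
  obtain ⟨σ, hσ⟩ := mem_gpOrbit.mp hv
  rw [Finset.prod_mul_distrib, mul_comm]
  congr 1
  rw [← hσ]
  exact Equiv.prod_comp σ (fun k => c (lam k))

lemma msym_double {R : Type*} [CommRing R] (n : ℕ) (lam : Fin n → ℕ) (α : Fin n → R) :
    msym n (fun k => 2 * lam k) α = ∑ v ∈ gpOrbit n lam, ∏ i, (α i ^ 2) ^ v i := by
  unfold msym
  have himg : Finset.image (fun σ : Equiv.Perm (Fin n) => (fun k => 2 * lam k) ∘ σ) Finset.univ
      = Finset.image (fun v : Fin n → ℕ => fun k => 2 * v k) (gpOrbit n lam) := by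
    rw [gpOrbit, Finset.image_image]
    rfl
  rw [himg, Finset.sum_image (fun x _ y _ h => funext fun k => by
    have h2 : 2 * x k = 2 * y k := congrFun h k
    omega)]
  exact Finset.sum_congr rfl fun v _ => Finset.prod_congr rfl fun i _ => by rw [pow_mul]

lemma gpOrbit_comp {n : ℕ} (lam : Fin n → ℕ) (τ : Equiv.Perm (Fin n)) :
    gpOrbit n (lam ∘ τ) = gpOrbit n lam := by
  ext v
  simp only [mem_gpOrbit]
  constructor
  · rintro ⟨σ, rfl⟩; exact ⟨σ.trans τ, by funext i; simp⟩
  · rintro ⟨σ, rfl⟩; exact ⟨σ.trans τ⁻¹, by funext i; simp⟩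

lemma vieta {R : Type*} [CommRing R] (n : ℕ) (β : Fin n → R) (i : Fin n) :
    ∑ j ∈ Finset.range (n + 1), (-1 : R) ^ (n - j) * esym n (n - j) β * β i ^ j = 0 := by
  nontriviality R
  classical
  set s : Multiset R := Multiset.map β Finset.univ.val with hs
  have hcard : Multiset.card s = n := by simp [hs]
  set P : Polynomial R := (s.map fun t => Polynomial.X - Polynomial.C t).prod with hP
  have heval : P.eval (β i) = 0 := by
    rw [hP, Polynomial.eval_multiset_prod]
    apply Multiset.prod_eq_zero
    simp only [Multiset.map_map, Multiset.mem_map]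
    refine ⟨β i, ?_, by simp⟩
    rw [hs]
    exact Multiset.mem_map_of_mem β (Finset.mem_univ i)
  have hdeg : P.natDegree < n + 1 := by
    have h1 := Polynomial.natDegree_multiset_prod_le (s.map fun t => Polynomial.X - Polynomial.C t)
    refine Nat.lt_succ_of_le (h1.trans (le_of_eq ?_))
    rw [Multiset.map_map]
    trans (Multiset.map (fun _ : R => 1) s).sum
    · exact congrArg Multiset.sum
        (Multiset.map_congr rfl (fun t _ => Polynomial.natDegree_X_sub_C t))
    · simp [hcard]
  have hcoeff : ∀ j ∈ Finset.range (n + 1),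
      P.coeff j = (-1 : R) ^ (n - j) * esym n (n - j) β := by
    intro j hj
    have hj' : j ≤ Multiset.card s := by
      rw [hcard]; exact Nat.lt_succ_iff.mp (Finset.mem_range.mp hj)
    rw [hP, Multiset.prod_X_sub_C_coeff s hj', hcard]
    congr 1
    rw [hs, Finset.esymm_map_val]
    rfl
  have h3 := Polynomial.eval_eq_sum_range' hdeg (β i)
  rw [heval] at h3
  calc ∑ j ∈ Finset.range (n + 1), (-1 : R) ^ (n - j) * esym n (n - j) β * β i ^ j
      = ∑ j ∈ Finset.range (n + 1), P.coeff j * β i ^ j :=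
        Finset.sum_congr rfl fun j hj => by rw [hcoeff j hj]
    _ = 0 := h3.symm

lemma esym_zero {R : Type*} [CommRing R] (n : ℕ) (β : Fin n → R) : esym n 0 β = 1 := by
  simp [esym]

lemma rhs_reindex {R : Type*} [CommRing R] (n : ℕ) (α : Fin n → R) (b : ℕ → R) :
    ∑ lam ∈ partsBdd n n, msym n (fun k => 2 * (n - lam k)) α * ∏ k : Fin n, b (lam k)
      = ∑ lam ∈ partsBdd n n,
          (∑ v ∈ gpOrbit n lam, ∏ i, (α i ^ 2) ^ v i) * ∏ k, b (n - lam k) := by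
  refine Finset.sum_nbij' (i := fun lam => fun k => n - lam (Fin.rev k))
    (j := fun lam => fun k => n - lam (Fin.rev k)) ?_ ?_ ?_ ?_ ?_
  · intro lam hlam
    obtain ⟨hb, hd⟩ := mem_partsBdd.mp hlam
    refine mem_partsBdd.mpr ⟨fun i => Nat.sub_le _ _, fun i j hij => ?_⟩
    have : Fin.rev j ≤ Fin.rev i := Fin.rev_le_rev.mpr hij
    exact Nat.sub_le_sub_left (hd _ _ this) n
  · intro lam hlam
    obtain ⟨hb, hd⟩ := mem_partsBdd.mp hlam
    refine mem_partsBdd.mpr ⟨fun i => Nat.sub_le _ _, fun i j hij => ?_⟩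
    have : Fin.rev j ≤ Fin.rev i := Fin.rev_le_rev.mpr hij
    exact Nat.sub_le_sub_left (hd _ _ this) n
  · intro lam hlam
    obtain ⟨hb, _⟩ := mem_partsBdd.mp hlam
    funext k
    simp only [Fin.rev_rev]
    exact Nat.sub_sub_self (hb k)
  · intro lam hlam
    obtain ⟨hb, _⟩ := mem_partsBdd.mp hlam
    funext k
    simp only [Fin.rev_rev]
    exact Nat.sub_sub_self (hb k)
  · intro lam hlam
    obtain ⟨hb, _⟩ := mem_partsBdd.mp hlam
    have h1 : msym n (fun k => 2 * (n - lam k)) α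
        = ∑ v ∈ gpOrbit n (fun k => n - lam (Fin.rev k)), ∏ i, (α i ^ 2) ^ v i := by
      rw [msym_double]
      congr 1
      have : (fun k => n - lam (Fin.rev k)) = (fun k => n - lam k) ∘ (Fin.revPerm : Equiv.Perm (Fin n)) := rfl
      rw [this, gpOrbit_comp]
    have h2 : (∏ k : Fin n, b (lam k))
        = ∏ k : Fin n, b (n - (n - lam (Fin.rev k))) := by
      rw [show (fun k : Fin n => b (n - (n - lam (Fin.rev k)))) = fun k => b (lam (Fin.rev k))
        from funext fun k => by rw [Nat.sub_sub_self (hb _)]]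
      exact (Equiv.prod_comp (Fin.revPerm : Equiv.Perm (Fin n)) (fun k => b (lam k))).symm
    rw [h1, h2]

/-- Gross–Prasad divisor matching: with `aᵢ = (-1)ⁱ eᵢ(α₁², …, αₙ²)` and `b₀ = 1`,
`∑_{λ ⊂ n × (n-1)} m_{2λ}(α) ∏ₖ (b_{n-λₖ} - a_{n-λₖ})
  = ∑_{λ ⊂ n × n} m_{2(n-λ)}(α) b_λ`,
where `m_{2μ}(α) = m_μ(α²)` is the monomial symmetric polynomial with doubled
parts and `b_λ = ∏ₖ b_{λₖ}`. -/
theorem gross_prasad_divisor_matching {R : Type*} [CommRing R] (n : ℕ)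
    (α : Fin n → R) (b : ℕ → R) (hb0 : b 0 = 1) :
    ∑ lam ∈ partsBdd n (n - 1),
        msym n (fun k => 2 * lam k) α *
          ∏ k : Fin n,
            (b (n - lam k) - (-1 : R) ^ (n - lam k) * esym n (n - lam k) (fun i => α i ^ 2))
      = ∑ lam ∈ partsBdd n n,
          msym n (fun k => 2 * (n - lam k)) α * ∏ k : Fin n, b (lam k) := by
  classical
  have hL : ∑ lam ∈ partsBdd n (n - 1),
      msym n (fun k => 2 * lam k) α *
        ∏ k : Fin n,
          (b (n - lam k) - (-1 : R) ^ (n - lam k) * esym n (n - lam k) (fun i => α i ^ 2))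
      = ∏ i : Fin n, ∑ j ∈ Finset.range (n - 1 + 1),
          (b (n - j) - (-1 : R) ^ (n - j) * esym n (n - j) (fun i => α i ^ 2))
            * (α i ^ 2) ^ j := by
    rw [grouping n (n - 1)
      (fun j => b (n - j) - (-1 : R) ^ (n - j) * esym n (n - j) (fun i => α i ^ 2))
      (fun i => α i ^ 2)]
    exact Finset.sum_congr rfl fun lam _ => by rw [msym_double]
  have hR : ∑ lam ∈ partsBdd n n,
      msym n (fun k => 2 * (n - lam k)) α * ∏ k : Fin n, b (lam k)
      = ∏ i : Fin n, ∑ j ∈ Finset.range (n + 1), b (n - j) * (α i ^ 2) ^ j := by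
    rw [rhs_reindex n α b,
      grouping n n (fun j => b (n - j)) (fun i => α i ^ 2)]
  rw [hL, hR]
  refine Finset.prod_congr rfl fun i _ => ?_
  have hn : n - 1 + 1 = n := Nat.succ_pred_eq_of_pos i.pos
  rw [hn, Finset.sum_range_succ, Nat.sub_self, hb0, one_mul]
  have hv := vieta n (fun i => α i ^ 2) i
  beta_reduce at hv
  rw [Finset.sum_range_succ, Nat.sub_self, esym_zero, pow_zero, one_mul, one_mul] at hv
  have expand : ∑ j ∈ Finset.range n,
      (b (n - j) - (-1 : R) ^ (n - j) * esym n (n - j) (fun i => α i ^ 2)) * (α i ^ 2) ^ j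
      = (∑ j ∈ Finset.range n, b (n - j) * (α i ^ 2) ^ j)
        - ∑ j ∈ Finset.range n,
            (-1 : R) ^ (n - j) * esym n (n - j) (fun i => α i ^ 2) * (α i ^ 2) ^ j := by
    rw [← Finset.sum_sub_distrib]
    exact Finset.sum_congr rfl fun j _ => by ring
  rw [expand]
  linear_combination -hv
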